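/- Let C be a binary code of length n with |C| = M codewords and minimum Hamming distance d_min ≥ 3. Then there exist a residue a modulo n + 1 and a code C' of binary words of length n such that: (i) every x ∈ C' satisfies σ(x) ≡ a (mod n+1); (ii) every x ∈ C' is at Hamming distance at most 1 from some codeword of C, and no two distinct words of C' are within Hamming distance 1 of the same codeword of C; (iii) |C'| ≥ ⌈M(⌈n/2⌉+1)/(n+1)⌉ ≥ ⌈M/2⌉; and (iv) the minimum Hamming distance of C' is at least d_min − 2. In particular, any two distinct words of C', viewed as lists of bits, have no common subsequence of length n − 1, so C' corrects a single deletion. -/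

import Mathlib

/-- The moment of a binary word `x = x_1 … x_n`: `σ(x) = ∑ i, i * x_i` (1-based indexing). -/
def mom {n : ℕ} (x : Fin n → Bool) : ℕ :=
  ∑ i : Fin n, ((i : ℕ) + 1) * (if x i then 1 else 0)


def bitv (b : Bool) : ℕ := if b then 1 else 0

def momL : List Bool → ℕ
  | [] => 0
  | b :: l => bitv b + l.count true + momL l

lemma momL_cons (b : Bool) (l : List Bool) : momL (b :: l) = bitv b + l.count true + momL l := rfl

lemma bitv_le_one (b : Bool) : bitv b ≤ 1 := by cases b <;> simp [bitv]

lemma count_insertIdx (b : Bool) : ∀ (p : ℕ) (l : List Bool), p ≤ l.length →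
    (l.insertIdx p b).count true = l.count true + bitv b
  | 0, l, _ => by cases b <;> simp [List.insertIdx, List.count_cons, bitv]
  | (p+1), [], h => by simp at h
  | (p+1), a :: l, h => by
      rw [List.insertIdx_succ_cons, List.count_cons, List.count_cons,
        count_insertIdx b p l (by simpa using h)]
      omega

lemma momL_insertIdx (b : Bool) : ∀ (p : ℕ) (l : List Bool), p ≤ l.length →
    momL (l.insertIdx p b) = momL l + (p+1) * bitv b + (l.drop p).count true
  | 0, l, _ => by simp [List.insertIdx, momL_cons]; omega
  | (p+1), [], h => by simp at h
  | (p+1), a :: l, h => by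
      rw [List.insertIdx_succ_cons, momL_cons, momL_cons,
        momL_insertIdx b p l (by simpa using h), count_insertIdx b p l (by simpa using h),
        List.drop_succ_cons]
      ring

lemma insertIdx_step (b : Bool) : ∀ (p : ℕ) (l : List Bool), (h : p < l.length) →
    l.get ⟨p, h⟩ = b → l.insertIdx p b = l.insertIdx (p+1) b
  | 0, a :: l, _, hb => by simp at hb; simp [List.insertIdx, hb]
  | (p+1), a :: l, h, hb => by
      rw [List.insertIdx_succ_cons, List.insertIdx_succ_cons,
        insertIdx_step b p l (by simpa using h) (by simpa using hb)]

lemma insertIdx_chain (b : Bool) (l : List Bool) : ∀ (k p : ℕ), p + k ≤ l.length →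
    (∀ i (h : i < l.length), p ≤ i → i < p + k → l.get ⟨i, h⟩ = b) →
    l.insertIdx p b = l.insertIdx (p+k) b
  | 0, p, _, _ => rfl
  | (k+1), p, hk, hall => by
      have hp : p < l.length := by omega
      rw [insertIdx_step b p l hp (hall p hp le_rfl (by omega))]
      have := insertIdx_chain b l k (p+1) (by omega)
        (fun i h h1 h2 => hall i h (by omega) (by omega))
      rw [this]
      congr 1
      omega

lemma vt_helper (w : List Bool) (b b' : Bool) (p q : ℕ) (hpq : p ≤ q) (hq : q ≤ w.length)
    (hmod : momL (w.insertIdx p b) % (w.length + 2) = momL (w.insertIdx q b') % (w.length + 2)) :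
    w.insertIdx p b = w.insertIdx q b' := by
  have hp : p ≤ w.length := le_trans hpq hq
  rw [momL_insertIdx b p w hp, momL_insertIdx b' q w hq] at hmod
  set seg := (w.drop p).take (q - p) with hseg
  have hseglen : seg.length = q - p := by
    simp [hseg, List.length_take, List.length_drop]; omega
  have hsplit : (w.drop p).count true = seg.count true + (w.drop q).count true := by
    conv_lhs => rw [← List.take_append_drop (q - p) (w.drop p)]
    rw [List.count_append, List.drop_drop, show p + (q - p) = q by omega]
  set t := seg.count true with ht
  set Tq := (w.drop q).count true with hTq
  have key : (p+1) * bitv b + t = (q+1) * bitv b' := by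
    have hA : (p+1) * bitv b + t + (momL w + Tq) ≡ (q+1) * bitv b' + (momL w + Tq)
        [MOD w.length + 2] := by
      unfold Nat.ModEq
      rw [show (p+1) * bitv b + t + (momL w + Tq) = momL w + (p + 1) * bitv b +
        (w.drop p).count true by rw [hsplit]; ring,
        show (q+1) * bitv b' + (momL w + Tq) = momL w + (q + 1) * bitv b' +
        (w.drop q).count true by ring]
      exact hmod
    have hB := hA.add_right_cancel' (momL w + Tq)
    have hb1 := bitv_le_one b
    have hb2 := bitv_le_one b'
    have htle : t ≤ q - p := hseglen ▸ (List.count_le_length : seg.count true ≤ seg.length)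
    have hmb : (p+1) * bitv b ≤ p+1 := by
      calc (p+1) * bitv b ≤ (p+1) * 1 := Nat.mul_le_mul_left _ hb1
      _ = p+1 := Nat.mul_one _
    have hmb' : (q+1) * bitv b' ≤ q+1 := by
      calc (q+1) * bitv b' ≤ (q+1) * 1 := Nat.mul_le_mul_left _ hb2
      _ = q+1 := Nat.mul_one _
    have h1 : (p+1) * bitv b + t < w.length + 2 := by omega
    have h2 : (q+1) * bitv b' < w.length + 2 := by omega
    unfold Nat.ModEq at hB
    rwa [Nat.mod_eq_of_lt h1, Nat.mod_eq_of_lt h2] at hB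
  -- elements of seg are elements of w in [p, q)
  have hget : ∀ i (h : i < w.length), p ≤ i → i < q → w.get ⟨i, h⟩ ∈ seg := by
    intro i h h1 h2
    have hlt : i - p < seg.length := by omega
    have : seg.get ⟨i - p, hlt⟩ = w.get ⟨i, h⟩ := by
      simp only [hseg, List.get_eq_getElem, List.getElem_take, List.getElem_drop]
      congr 1
      omega
    rw [← this]
    exact List.get_mem _ _
  cases b' with
  | false =>
    have hb : b = false := by
      cases b
      · rfl
      · simp [bitv] at key
    subst hb
    have ht0 : t = 0 := by simp [bitv] at key; omega
    have hall : ∀ i (h : i < w.length), p ≤ i → i < p + (q - p) → w.get ⟨i, h⟩ = false := by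
      intro i h h1 h2
      have hmem := hget i h h1 (by omega)
      have : true ∉ seg := List.count_eq_zero.mp ht0
      cases hcase : w.get ⟨i, h⟩
      · rfl
      · rw [hcase] at hmem; exact absurd hmem this
    have := insertIdx_chain false w (q - p) p (by omega) hall
    rw [this]
    congr 1
    omega
  | true =>
    have hb : b = true := by
      cases b
      · exfalso
        simp [bitv] at key
        have htle : t ≤ q - p := hseglen ▸ (List.count_le_length : seg.count true ≤ seg.length)
        omega
      · rfl
    subst hb
    have htfull : t = seg.length := by simp [bitv] at key; omega
    have hall : ∀ i (h : i < w.length), p ≤ i → i < p + (q - p) → w.get ⟨i, h⟩ = true := by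
      intro i h h1 h2
      have hmem := hget i h h1 (by omega)
      exact (List.count_eq_length.mp htfull _ hmem).symm
    have := insertIdx_chain true w (q - p) p (by omega) hall
    rw [this]
    congr 1
    omega

lemma sublist_succ {α : Type*} {w l : List α} (h : w.Sublist l) (hl : l.length = w.length + 1) :
    ∃ p b, p ≤ w.length ∧ l = w.insertIdx p b := by
  induction h with
  | slnil => simp at hl
  | @cons l₁ l₂ a h ih =>
      have hw : l₁ = l₂ := h.eq_of_length (by simp at hl; omega)
      exact ⟨0, a, Nat.zero_le _, by simp [List.insertIdx, hw]⟩
  | @cons_cons l₁ l₂ a h ih =>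
      obtain ⟨p, b, hp, he⟩ := ih (by simp at hl ⊢; omega)
      exact ⟨p+1, b, by simp; omega, by rw [List.insertIdx_succ_cons, ← he]⟩

lemma count_ofFn : ∀ {n : ℕ} (g : Fin n → Bool), (List.ofFn g).count true = ∑ i, bitv (g i)
  | 0, g => by simp
  | (n+1), g => by
      rw [List.ofFn_succ, List.count_cons, count_ofFn (fun i => g i.succ), Fin.sum_univ_succ]
      cases h : g 0 <;> simp [bitv, h] <;> omega

lemma momL_ofFn : ∀ {n : ℕ} (g : Fin n → Bool), momL (List.ofFn g) = mom g
  | 0, g => by simp [mom, momL]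
  | (n+1), g => by
      rw [List.ofFn_succ, momL_cons, count_ofFn (fun i => g i.succ),
        momL_ofFn (fun i => g i.succ)]
      unfold mom
      rw [Fin.sum_univ_succ]
      have : ∀ i : Fin n, ((i.succ : ℕ) + 1) * (if g i.succ then 1 else 0)
          = ((i : ℕ) + 1) * (if g i.succ then 1 else 0) + bitv (g i.succ) := by
        intro i
        simp only [Fin.val_succ, bitv]
        cases g i.succ <;> simp <;> ring
      rw [Finset.sum_congr rfl (fun i _ => this i), Finset.sum_add_distrib]
      simp [bitv]
      ring

lemma vt_unique {n : ℕ} (x y : Fin n → Bool) (hm : mom x % (n+1) = mom y % (n+1))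
    (w : List Bool) (hw : w.length = n - 1) (hx : w.Sublist (List.ofFn x))
    (hy : w.Sublist (List.ofFn y)) : x = y := by
  rcases Nat.eq_zero_or_pos n with hn | hn
  · subst hn; funext i; exact i.elim0
  have hlx : (List.ofFn x).length = w.length + 1 := by simp [hw]; omega
  have hly : (List.ofFn y).length = w.length + 1 := by simp [hw]; omega
  obtain ⟨p, b, hp, hex⟩ := sublist_succ hx hlx
  obtain ⟨q, b', hq, hey⟩ := sublist_succ hy hly
  have hn1 : n + 1 = w.length + 2 := by omega
  have hmx : momL (w.insertIdx p b) % (w.length + 2) = momL (w.insertIdx q b') % (w.length + 2) := by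
    rw [← hex, ← hey, momL_ofFn, momL_ofFn, ← hn1]
    exact hm
  have hwl : w.length = n - 1 := hw
  have key : w.insertIdx p b = w.insertIdx q b' := by
    rcases le_total p q with hpq | hpq
    · exact vt_helper w b b' p q hpq (by omega) hmx
    · exact (vt_helper w b' b q p hpq (by omega) hmx.symm).symm
  apply List.ofFn_injective
  rw [hex, hey, key]


lemma mom_update {n : ℕ} (c : Fin n → Bool) (i : Fin n) (b : Bool) :
    mom (Function.update c i b) + ((i:ℕ)+1) * bitv (c i) = mom c + ((i:ℕ)+1) * bitv b := by
  classical
  unfold mom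
  rw [← Finset.add_sum_erase _ _ (Finset.mem_univ i),
    ← Finset.add_sum_erase _ (fun j : Fin n => ((j:ℕ)+1) * (if c j then 1 else 0)) (Finset.mem_univ i)]
  have he : ∀ j ∈ Finset.univ.erase i,
      ((j:ℕ)+1) * (if Function.update c i b j then 1 else 0)
        = ((j:ℕ)+1) * (if c j then 1 else 0) := by
    intro j hj
    rw [Function.update_of_ne (Finset.ne_of_mem_erase hj)]
  rw [Finset.sum_congr rfl he, Function.update_self]
  simp only [bitv]
  ring

def ball {n : ℕ} (c : Fin n → Bool) : Finset (Fin n → Bool) :=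
  insert c (Finset.univ.image (fun i => Function.update c i (!c i)))

lemma mem_ball_dist {n : ℕ} {c x : Fin n → Bool} (h : x ∈ ball c) : hammingDist c x ≤ 1 := by
  classical
  rcases Finset.mem_insert.mp h with rfl | h
  · simp
  · obtain ⟨i, _, rfl⟩ := Finset.mem_image.mp h
    have hsub : (Finset.univ.filter fun j => c j ≠ Function.update c i (!c i) j) ⊆ {i} := by
      intro j hj
      simp only [Finset.mem_filter, Finset.mem_univ, true_and] at hj
      simp only [Finset.mem_singleton]
      by_contra hne
      rw [Function.update_of_ne hne] at hj
      exact hj rfl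
    calc hammingDist c (Function.update c i (!c i))
        = (Finset.univ.filter fun j => c j ≠ Function.update c i (!c i) j).card := rfl
      _ ≤ ({i} : Finset (Fin n)).card := Finset.card_le_card hsub
      _ = 1 := Finset.card_singleton i

def Ac {n : ℕ} (c : Fin n → Bool) : Finset (ZMod (n+1)) :=
  (ball c).image (fun x => (mom x : ZMod (n+1)))

lemma card_Ac {n : ℕ} (c : Fin n → Bool) : (n+1)/2 + 1 ≤ (Ac c).card := by
  classical
  set k := (n+1)/2 with hk
  set δ : ℕ → ℕ := fun j => if h : j < n then (if c ⟨j, h⟩ then n - j else j + 1) else 1 with hδ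
  have hδrange : ∀ j < k, 1 ≤ δ j ∧ δ j ≤ n ∧ (∀ h : j < n,
      (c ⟨j, h⟩ = true → δ j = n - j) ∧ (c ⟨j, h⟩ = false → δ j = j + 1)) := by
    intro j hj
    have hjn : j < n := by omega
    constructor
    · simp only [hδ, dif_pos hjn]
      split <;> omega
    constructor
    · simp only [hδ, dif_pos hjn]
      split <;> omega
    · intro h
      constructor <;> intro hc <;> simp [hδ, dif_pos hjn, hc]
  set D : Finset ℕ := insert 0 ((Finset.range k).image δ) with hD
  have hDle : ∀ d ∈ D, d ≤ n := by
    intro d hd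
    rcases Finset.mem_insert.mp hd with rfl | hd
    · omega
    · obtain ⟨j, hj, rfl⟩ := Finset.mem_image.mp hd
      exact (hδrange j (Finset.mem_range.mp hj)).2.1
  have hcardD : D.card = k + 1 := by
    rw [hD, Finset.card_insert_of_notMem, Finset.card_image_of_injOn, Finset.card_range]
    · intro j hj j' hj' he
      rw [Finset.coe_range, Set.mem_Iio] at hj hj'
      have hjn : j < n := by omega
      have hj'n : j' < n := by omega
      simp only [hδ, dif_pos hjn, dif_pos hj'n] at he
      split_ifs at he <;> omega
    · intro hmem
      obtain ⟨j, hj, he⟩ := Finset.mem_image.mp hmem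
      have := (hδrange j (Finset.mem_range.mp hj)).1
      omega
  -- the map d ↦ mom c + d lands in Ac c
  have hmap : ∀ d ∈ D, ((mom c + d : ℕ) : ZMod (n+1)) ∈ Ac c := by
    intro d hd
    rcases Finset.mem_insert.mp hd with rfl | hd
    · refine Finset.mem_image.mpr ⟨c, Finset.mem_insert_self _ _, by simp⟩
    · obtain ⟨j, hj, rfl⟩ := Finset.mem_image.mp hd
      have hjk := Finset.mem_range.mp hj
      have hjn : j < n := by omega
      set i : Fin n := ⟨j, hjn⟩ with hi
      refine Finset.mem_image.mpr ⟨Function.update c i (!c i), ?_, ?_⟩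
      · exact Finset.mem_insert_of_mem (Finset.mem_image.mpr ⟨i, Finset.mem_univ i, rfl⟩)
      · have hiv : (i:ℕ) = j := rfl
        show ((mom (Function.update c i (!c i)) : ℕ) : ZMod (n+1))
            = ((mom c + δ j : ℕ) : ZMod (n+1))
        cases hc : c i with
        | false =>
          have hδj : δ j = j + 1 := ((hδrange j hjk).2.2 hjn).2 hc
          simp only [Bool.not_false]
          have hnat : mom (Function.update c i true) = mom c + (j + 1) := by
            have hmu := mom_update c i true
            rw [hc] at hmu
            simp [bitv, hiv] at hmu
            omega
          rw [hδj, ← hnat]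
        | true =>
          have hδj : δ j = n - j := ((hδrange j hjk).2.2 hjn).1 hc
          simp only [Bool.not_true]
          have hnat : mom c = mom (Function.update c i false) + (j + 1) := by
            have hmu := mom_update c i false
            rw [hc] at hmu
            simp [bitv, hiv] at hmu
            omega
          rw [hδj]
          have heq : mom c + (n - j) = mom (Function.update c i false) + (n + 1) := by omega
          rw [heq, Nat.cast_add, ZMod.natCast_self, add_zero]
  have hinj : Set.InjOn (fun d => ((mom c + d : ℕ) : ZMod (n+1))) D := by
    intro d hd d' hd' he
    simp only at he
    push_cast at he
    have he' : ((d : ℕ) : ZMod (n+1)) = ((d' : ℕ) : ZMod (n+1)) := by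
      exact add_left_cancel he
    have hv := congrArg ZMod.val he'
    rw [ZMod.val_natCast, ZMod.val_natCast] at hv
    have h1 := hDle d hd
    have h2 := hDle d' hd'
    rwa [Nat.mod_eq_of_lt (by omega), Nat.mod_eq_of_lt (by omega)] at hv
  calc k + 1 = D.card := hcardD.symm
    _ = (D.image (fun d => ((mom c + d : ℕ) : ZMod (n+1)))).card :=
        (Finset.card_image_of_injOn hinj).symm
    _ ≤ (Ac c).card := Finset.card_le_card (by
        intro z hz
        obtain ⟨d, hd, rfl⟩ := Finset.mem_image.mp hz
        exact hmap d hd)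

/-- One-flip moment balancing. From a code `C` of length `n`, size `M` and
minimum Hamming distance `d_min ≥ 3` one obtains a residue `a` mod `n+1` and a code `C'`
such that: (i) every `x ∈ C'` has `σ(x) ≡ a (mod n+1)`; (ii) every `x ∈ C'` is within
Hamming distance 1 of a codeword of `C` and no two distinct words of `C'` are within
distance 1 of the same codeword; (iii) `|C'| ≥ ⌈M(⌈n/2⌉+1)/(n+1)⌉ ≥ ⌈M/2⌉`;
(iv) `C'` has minimum Hamming distance at least `d_min − 2`; moreover distinct words of
`C'` have no common subsequence of length `n − 1` (single deletion correction). -/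
theorem stmt6 {n M dmin : ℕ} (C : Finset (Fin n → Bool)) (hM : C.card = M)
    (hdmin : 3 ≤ dmin)
    (hC : ∀ c ∈ C, ∀ c' ∈ C, c ≠ c' → dmin ≤ hammingDist c c') :
    ∃ (a : ℕ) (C' : Finset (Fin n → Bool)),
      (∀ x ∈ C', mom x % (n + 1) = a) ∧
      (∀ x ∈ C', ∃ c ∈ C, hammingDist c x ≤ 1) ∧
      (∀ x ∈ C', ∀ y ∈ C', x ≠ y →
        ∀ c ∈ C, ¬ (hammingDist c x ≤ 1 ∧ hammingDist c y ≤ 1)) ∧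
      (⌈(M : ℚ) * ((⌈(n : ℚ) / 2⌉ : ℚ) + 1) / ((n : ℚ) + 1)⌉ ≤ (C'.card : ℤ)) ∧
      (⌈(M : ℚ) / 2⌉ ≤ (C'.card : ℤ)) ∧
      (∀ x ∈ C', ∀ y ∈ C', x ≠ y → dmin - 2 ≤ hammingDist x y) ∧
      (∀ x ∈ C', ∀ y ∈ C', x ≠ y →
        ¬ ∃ w : List Bool, w.length = n - 1 ∧
          w.Sublist (List.ofFn x) ∧ w.Sublist (List.ofFn y)) := by
  classical
  set k := (n+1)/2 with hk
  have hsum : ∑ c ∈ C, (Ac c).card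
      = ∑ a : ZMod (n+1), (C.filter (fun c => a ∈ Ac c)).card := by
    simp_rw [Finset.card_filter]
    rw [Finset.sum_comm]
    refine Finset.sum_congr rfl ?_
    intro c _
    rw [← Finset.card_filter]
    congr 1
    ext z
    simp
  have hlow : C.card * (k+1) ≤ ∑ a : ZMod (n+1), (C.filter (fun c => a ∈ Ac c)).card := by
    rw [← hsum]
    calc C.card * (k+1) = ∑ _c ∈ C, (k+1) := by rw [Finset.sum_const, smul_eq_mul]
      _ ≤ ∑ c ∈ C, (Ac c).card := Finset.sum_le_sum (fun c _ => card_Ac c)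
  obtain ⟨a0, -, hmax⟩ := Finset.exists_max_image (Finset.univ : Finset (ZMod (n+1)))
    (fun a => (C.filter (fun c => a ∈ Ac c)).card) ⟨0, Finset.mem_univ 0⟩
  set F := C.filter (fun c => a0 ∈ Ac c) with hF
  have hMain : M * (k+1) ≤ (n+1) * F.card := by
    rw [← hM]
    calc C.card * (k+1) ≤ ∑ a : ZMod (n+1), (C.filter (fun c => a ∈ Ac c)).card := hlow
      _ ≤ (Finset.univ : Finset (ZMod (n+1))).card • F.card :=
          Finset.sum_le_card_nsmul _ _ _ (fun a _ => hmax a (Finset.mem_univ a))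
      _ = (n+1) * F.card := by rw [Finset.card_univ, ZMod.card, smul_eq_mul]
  have hex : ∀ c ∈ F, ∃ x, x ∈ ball c ∧ ((mom x : ZMod (n+1)) = a0) := by
    intro c hc
    have h := (Finset.mem_filter.mp hc).2
    obtain ⟨x, hx1, hx2⟩ := Finset.mem_image.mp h
    exact ⟨x, hx1, hx2⟩
  set pick : (Fin n → Bool) → (Fin n → Bool) := fun c =>
    if h : ∃ x, x ∈ ball c ∧ ((mom x : ZMod (n+1)) = a0) then h.choose else c with hpickdef
  have hpick : ∀ c ∈ F, pick c ∈ ball c ∧ ((mom (pick c) : ZMod (n+1)) = a0) := by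
    intro c hc
    have h := hex c hc
    simp only [hpickdef, dif_pos h]
    exact h.choose_spec
  set C' := F.image pick with hC'
  have hFC : ∀ c ∈ F, c ∈ C := fun c hc => (Finset.mem_filter.mp hc).1
  have huniq : ∀ c ∈ C, ∀ c' ∈ C, ∀ x : Fin n → Bool,
      hammingDist c x ≤ 1 → hammingDist c' x ≤ 1 → c = c' := by
    intro c hc c' hc' x h1 h2
    by_contra hne
    have hd := hC c hc c' hc' hne
    have htri : hammingDist c c' ≤ hammingDist c x + hammingDist x c' :=
      hammingDist_triangle _ _ _
    rw [hammingDist_comm x c'] at htri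
    omega
  have hinj : Set.InjOn pick F := by
    intro c1 h1 c2 h2 he
    have h1' : c1 ∈ F := h1
    have h2' : c2 ∈ F := h2
    have p1 := hpick c1 h1'
    have p2 := hpick c2 h2'
    exact huniq c1 (hFC _ h1') c2 (hFC _ h2') (pick c1) (mem_ball_dist p1.1)
      (by rw [he]; exact mem_ball_dist p2.1)
  have hcard : C'.card = F.card := Finset.card_image_of_injOn hinj
  have hmom : ∀ x ∈ C', mom x % (n + 1) = a0.val := by
    intro x hx
    obtain ⟨c, hc, rfl⟩ := Finset.mem_image.mp hx
    have h := congrArg ZMod.val (hpick c hc).2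
    rwa [ZMod.val_natCast] at h
  refine ⟨a0.val, C', hmom, ?_, ?_, ?_, ?_, ?_, ?_⟩
  · intro x hx
    obtain ⟨c, hc, rfl⟩ := Finset.mem_image.mp hx
    exact ⟨c, hFC c hc, mem_ball_dist (hpick c hc).1⟩
  · rintro x hx y hy hxy c hc ⟨hd1, hd2⟩
    obtain ⟨c1, hc1, rfl⟩ := Finset.mem_image.mp hx
    obtain ⟨c2, hc2, rfl⟩ := Finset.mem_image.mp hy
    have e1 : c = c1 := huniq c hc c1 (hFC _ hc1) (pick c1) hd1 (mem_ball_dist (hpick c1 hc1).1)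
    have e2 : c = c2 := huniq c hc c2 (hFC _ hc2) (pick c2) hd2 (mem_ball_dist (hpick c2 hc2).1)
    exact hxy (by rw [← e1, e2])
  · have hceil : (⌈(n:ℚ)/2⌉ : ℤ) = (k : ℤ) := by
      rw [Int.ceil_eq_iff]
      have hA : (n:ℚ) ≤ 2*(k:ℚ) := by exact_mod_cast (show (n:ℕ) ≤ 2*k by omega)
      have hB : (2*(k:ℚ)) ≤ (n:ℚ)+1 := by exact_mod_cast (show 2*k ≤ n+1 by omega)
      constructor
      · push_cast
        linarith
      · push_cast
        linarith
    rw [hceil, Int.ceil_le, div_le_iff₀ (by positivity : (0:ℚ) < (n:ℚ)+1)]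
    have hle : (M*(k+1) : ℕ) ≤ ((n+1) * C'.card : ℕ) := by rw [hcard]; exact hMain
    calc (M:ℚ) * (((k:ℤ):ℚ) + 1) = ((M*(k+1):ℕ):ℚ) := by push_cast; ring
      _ ≤ (((n+1)*C'.card : ℕ):ℚ) := by exact_mod_cast hle
      _ = ((C'.card:ℤ):ℚ) * ((n:ℚ)+1) := by push_cast; ring
  · have h2k : n + 1 ≤ 2*(k+1) := by omega
    have hM2 : M ≤ 2 * C'.card := by
      have h1 : (n+1) * M ≤ (n+1) * (2*C'.card) := by
        calc (n+1)*M = M*(n+1) := Nat.mul_comm _ _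
          _ ≤ M*(2*(k+1)) := Nat.mul_le_mul_left M h2k
          _ = 2*(M*(k+1)) := by ring
          _ ≤ 2*((n+1)*C'.card) := Nat.mul_le_mul_left 2 (by rw [hcard]; exact hMain)
          _ = (n+1)*(2*C'.card) := by ring
      exact Nat.le_of_mul_le_mul_left h1 (Nat.succ_pos n)
    rw [Int.ceil_le, div_le_iff₀ (by norm_num : (0:ℚ) < 2)]
    calc (M:ℚ) ≤ ((2*C'.card:ℕ):ℚ) := by exact_mod_cast hM2
      _ = ((C'.card:ℤ):ℚ)*2 := by push_cast; ring
  · intro x hx y hy hxy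
    obtain ⟨c1, hc1, rfl⟩ := Finset.mem_image.mp hx
    obtain ⟨c2, hc2, rfl⟩ := Finset.mem_image.mp hy
    have hne : c1 ≠ c2 := by
      intro h
      exact hxy (by rw [h])
    have hd := hC c1 (hFC _ hc1) c2 (hFC _ hc2) hne
    have t1 : hammingDist c1 c2 ≤ hammingDist c1 (pick c1) + hammingDist (pick c1) c2 :=
      hammingDist_triangle _ _ _
    have t2 : hammingDist (pick c1) c2 ≤ hammingDist (pick c1) (pick c2)
        + hammingDist (pick c2) c2 := hammingDist_triangle _ _ _
    have b1 : hammingDist c1 (pick c1) ≤ 1 := mem_ball_dist (hpick c1 hc1).1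
    have b2 : hammingDist (pick c2) c2 ≤ 1 := by
      rw [hammingDist_comm]
      exact mem_ball_dist (hpick c2 hc2).1
    omega
  · rintro x hx y hy hxy ⟨w, hw, hwx, hwy⟩
    exact hxy (vt_unique x y ((hmom x hx).trans (hmom y hy).symm) w hw hwx hwy)
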